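/- Let δ ∈ (0, π/4], α, β, γ ∈ (0, π/2], φ ∈ (0, 2π], and let |ψ_GHZ⟩ = √κ (cos δ |000⟩ + sin δ e^{iφ} |ψ_A⟩|ψ_B⟩|ψ_C⟩) with |ψ_A⟩ = cos α|0⟩ + sin α|1⟩, |ψ_B⟩ = cos β|0⟩ + sin β|1⟩, |ψ_C⟩ = cos γ|0⟩ + sin γ|1⟩ and κ = (1 + 2 cos δ sin δ cos α cos β cos γ cos φ)^{-1}, and set ρ_ABC = |ψ_GHZ⟩⟨ψ_GHZ|. Then the maximal CHSH violations of the two-qubit reductions obey the trade-off relation 8 ≤ ⟨CHSH⟩²_{ρ_AB} + ⟨CHSH⟩²_{ρ_BC} + ⟨CHSH⟩²_{ρ_AC} ≤ 12. -/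

import Mathlib

open Matrix Finset

noncomputable section

/-- The three Pauli matrices σ₁, σ₂, σ₃. -/
def pauli : Fin 3 → Matrix (Fin 2) (Fin 2) ℂ :=
  ![!![0, 1; 1, 0], !![0, -Complex.I; Complex.I, 0], !![1, 0; 0, -1]]

/-- Kronecker (tensor) product of two one-qubit matrices. -/
def kron2 (A B : Matrix (Fin 2) (Fin 2) ℂ) :
    Matrix (Fin 2 × Fin 2) (Fin 2 × Fin 2) ℂ :=
  fun p q => A p.1 q.1 * B p.2 q.2

/-- Correlation matrix M(ρ) of a two-qubit density matrix: M ij = tr (ρ (σᵢ ⊗ σⱼ)). -/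
def corr (ρ : Matrix (Fin 2 × Fin 2) (Fin 2 × Fin 2) ℂ) :
    Matrix (Fin 3) (Fin 3) ℝ :=
  fun i j => ((ρ * kron2 (pauli i) (pauli j)).trace).re

lemma corr_herm (ρ : Matrix (Fin 2 × Fin 2) (Fin 2 × Fin 2) ℂ) :
    ((corr ρ)ᵀ * corr ρ).IsHermitian := by
  simpa [Matrix.conjTranspose_eq_transpose_of_trivial] using
    Matrix.isHermitian_conjTranspose_mul_self (corr ρ)

/-- Maximal CHSH violation squared:  ⟨CHSH⟩²_ρ = 4(τ₁+τ₂) where τ₁ ≥ τ₂ ≥ τ₃ are the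
eigenvalues of M(ρ)ᵀM(ρ); equivalently 4(tr(MᵀM) − τ₃) where τ₃ is the smallest one. -/
def CHSHsq (ρ : Matrix (Fin 2 × Fin 2) (Fin 2 × Fin 2) ℂ) : ℝ :=
  4 * (((corr ρ)ᵀ * corr ρ).trace -
        Finset.univ.inf' Finset.univ_nonempty (corr_herm ρ).eigenvalues)

/-- Partial trace over the third qubit: ρ_AB. -/
def ptrC (ρ : Matrix (Fin 2 × Fin 2 × Fin 2) (Fin 2 × Fin 2 × Fin 2) ℂ) :
    Matrix (Fin 2 × Fin 2) (Fin 2 × Fin 2) ℂ :=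
  fun p q => ∑ m : Fin 2, ρ (p.1, p.2, m) (q.1, q.2, m)

/-- Partial trace over the second qubit: ρ_AC. -/
def ptrB (ρ : Matrix (Fin 2 × Fin 2 × Fin 2) (Fin 2 × Fin 2 × Fin 2) ℂ) :
    Matrix (Fin 2 × Fin 2) (Fin 2 × Fin 2) ℂ :=
  fun p q => ∑ m : Fin 2, ρ (p.1, m, p.2) (q.1, m, q.2)

/-- Partial trace over the first qubit: ρ_BC. -/
def ptrA (ρ : Matrix (Fin 2 × Fin 2 × Fin 2) (Fin 2 × Fin 2 × Fin 2) ℂ) :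
    Matrix (Fin 2 × Fin 2) (Fin 2 × Fin 2) ℂ :=
  fun p q => ∑ m : Fin 2, ρ (m, p.1, p.2) (m, q.1, q.2)

/-- Density matrix |ψ⟩⟨ψ| of a 3-qubit pure state. -/
def pureState3 (ψ : Fin 2 × Fin 2 × Fin 2 → ℂ) :
    Matrix (Fin 2 × Fin 2 × Fin 2) (Fin 2 × Fin 2 × Fin 2) ℂ :=
  fun p q => ψ p * (starRingEnd ℂ) (ψ q)

/-- The one-qubit basis vector |0⟩. -/
def ket0 : Fin 2 → ℂ := ![1, 0]

/-- The one-qubit basis vector |1⟩. -/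
def ket1 : Fin 2 → ℂ := ![0, 1]

end

/-- Trace of a real symmetric matrix is the sum of its eigenvalues. -/
lemma aux_trace_eq_sum_eig {n : Type*} [Fintype n] [DecidableEq n] {A : Matrix n n ℝ}
    (hA : A.IsHermitian) : A.trace = ∑ i, hA.eigenvalues i := by
  simpa using hA.trace_eq_sum_eigenvalues

/-- Bounds on the smallest eigenvalue used in `CHSHsq`. -/
lemma aux_lam_bounds (ρ : Matrix (Fin 2 × Fin 2) (Fin 2 × Fin 2) ℂ) :
    0 ≤ Finset.univ.inf' Finset.univ_nonempty (corr_herm ρ).eigenvalues ∧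
    3 * Finset.univ.inf' Finset.univ_nonempty (corr_herm ρ).eigenvalues ≤
      ((corr ρ)ᵀ * corr ρ).trace := by
  have hpsd : ((corr ρ)ᵀ * corr ρ).PosSemidef := by
    simpa [Matrix.conjTranspose_eq_transpose_of_trivial] using
      Matrix.posSemidef_conjTranspose_mul_self (corr ρ)
  constructor
  · exact Finset.le_inf' _ _ (fun i _ => hpsd.eigenvalues_nonneg i)
  · rw [aux_trace_eq_sum_eig (corr_herm ρ)]
    have h3 : ∀ i : Fin 3,
        Finset.univ.inf' Finset.univ_nonempty (corr_herm ρ).eigenvalues ≤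
          (corr_herm ρ).eigenvalues i :=
      fun i => Finset.inf'_le _ (Finset.mem_univ i)
    have := h3 0; have := h3 1; have := h3 2
    rw [Fin.sum_univ_three]
    linarith

set_option maxHeartbeats 4000000 in
/-- For any 3-qubit pure state, the sum of the three correlation-matrix norms equals
`3 * (‖ψ‖²)²`. -/
lemma aux_key (ψ : Fin 2 × Fin 2 × Fin 2 → ℂ) :
    ((corr (ptrC (pureState3 ψ)))ᵀ * corr (ptrC (pureState3 ψ))).trace +
    ((corr (ptrA (pureState3 ψ)))ᵀ * corr (ptrA (pureState3 ψ))).trace +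
    ((corr (ptrB (pureState3 ψ)))ᵀ * corr (ptrB (pureState3 ψ))).trace =
    3 * (∑ p, Complex.normSq (ψ p)) ^ 2 := by
  simp only [corr, ptrC, ptrA, ptrB, pureState3, kron2, Matrix.trace, Matrix.diag,
    Matrix.mul_apply, Matrix.transpose_apply, Fintype.sum_prod_type, Fin.sum_univ_two,
    Fin.sum_univ_three, Complex.normSq_apply]
  norm_num [pauli, Matrix.cons_val_zero, Matrix.cons_val_one, Matrix.head_cons,
    Matrix.cons_val_two, Matrix.tail_cons]
  ring

set_option maxHeartbeats 4000000

theorem chsh_tradeoff_GHZ_state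
    (δ α β γ φ κ : ℝ)
    (hδ : 0 < δ ∧ δ ≤ Real.pi / 4)
    (hα : 0 < α ∧ α ≤ Real.pi / 2)
    (hβ : 0 < β ∧ β ≤ Real.pi / 2)
    (hγ : 0 < γ ∧ γ ≤ Real.pi / 2)
    (hφ : 0 < φ ∧ φ ≤ 2 * Real.pi)
    (hκ : κ = (1 + 2 * Real.cos δ * Real.sin δ * Real.cos α * Real.cos β *
      Real.cos γ * Real.cos φ)⁻¹)
    (ψA ψB ψC : Fin 2 → ℂ)
    (hψA : ψA = ![(Real.cos α : ℂ), (Real.sin α : ℂ)])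
    (hψB : ψB = ![(Real.cos β : ℂ), (Real.sin β : ℂ)])
    (hψC : ψC = ![(Real.cos γ : ℂ), (Real.sin γ : ℂ)])
    (ψ : Fin 2 × Fin 2 × Fin 2 → ℂ)
    (hψ : ψ = fun p => (Real.sqrt κ : ℂ) *
      ((Real.cos δ : ℂ) * (ket0 p.1 * ket0 p.2.1 * ket0 p.2.2) +
       (Real.sin δ : ℂ) * Complex.exp (Complex.I * (φ : ℂ)) *
         (ψA p.1 * ψB p.2.1 * ψC p.2.2)))
    (ρ : Matrix (Fin 2 × Fin 2 × Fin 2) (Fin 2 × Fin 2 × Fin 2) ℂ)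
    (hρ : ρ = pureState3 ψ) :
    8 ≤ CHSHsq (ptrC ρ) + CHSHsq (ptrA ρ) + CHSHsq (ptrB ρ) ∧
      CHSHsq (ptrC ρ) + CHSHsq (ptrA ρ) + CHSHsq (ptrB ρ) ≤ 12 := by
  have pi_pos := Real.pi_pos
  -- positivity of the normalization denominator
  have hcδ : 0 ≤ Real.cos δ :=
    Real.cos_nonneg_of_mem_Icc ⟨by linarith, by linarith⟩
  have hsδ : 0 ≤ Real.sin δ := Real.sin_nonneg_of_nonneg_of_le_pi hδ.1.le (by linarith)
  have hcα : 0 ≤ Real.cos α := Real.cos_nonneg_of_mem_Icc ⟨by linarith, hα.2⟩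
  have hcβ : 0 ≤ Real.cos β := Real.cos_nonneg_of_mem_Icc ⟨by linarith, hβ.2⟩
  have hcγ : 0 ≤ Real.cos γ := Real.cos_nonneg_of_mem_Icc ⟨by linarith, hγ.2⟩
  have hsα : 0 < Real.sin α := Real.sin_pos_of_pos_of_lt_pi hα.1 (by linarith)
  have pythδ := Real.sin_sq_add_cos_sq δ
  have pythα := Real.sin_sq_add_cos_sq α
  have pythβ := Real.sin_sq_add_cos_sq β
  have pythγ := Real.sin_sq_add_cos_sq γ
  have pythφ := Real.sin_sq_add_cos_sq φ
  have hcα1 : Real.cos α < 1 := by nlinarith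
  have hcβ1 : Real.cos β ≤ 1 := Real.cos_le_one β
  have hcγ1 : Real.cos γ ≤ 1 := Real.cos_le_one γ
  have hcφ1 : |Real.cos φ| ≤ 1 := Real.abs_cos_le_one φ
  have habs := abs_le.mp hcφ1
  have h2cs : 2 * Real.cos δ * Real.sin δ ≤ 1 := by nlinarith [sq_nonneg (Real.cos δ - Real.sin δ)]
  have ht0 : 0 ≤ 2 * Real.cos δ * Real.sin δ * Real.cos α * Real.cos β * Real.cos γ := by
    have := mul_nonneg (mul_nonneg (mul_nonneg (mul_nonneg (mul_nonneg
      (by linarith : (0:ℝ) ≤ 2) hcδ) hsδ) hcα) hcβ) hcγ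
    linarith
  have ht1 : 2 * Real.cos δ * Real.sin δ * Real.cos α * Real.cos β * Real.cos γ < 1 := by
    nlinarith [mul_nonneg (mul_nonneg hcδ hsδ) hcα, mul_nonneg (mul_nonneg (mul_nonneg hcδ hsδ) hcα) hcβ]
  have hD : 0 < 1 + 2 * Real.cos δ * Real.sin δ * Real.cos α * Real.cos β *
      Real.cos γ * Real.cos φ := by
    have h5 : 0 ≤ (2 * Real.cos δ * Real.sin δ * Real.cos α * Real.cos β * Real.cos γ) *
        (Real.cos φ + 1) := mul_nonneg ht0 (by linarith)
    nlinarith [h5]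
  have hκpos : 0 < κ := hκ ▸ inv_pos.mpr hD
  have hκD : κ * (1 + 2 * Real.cos δ * Real.sin δ * Real.cos α * Real.cos β *
      Real.cos γ * Real.cos φ) = 1 := by
    rw [hκ]; field_simp
  have hs : Real.sqrt κ * Real.sqrt κ = κ := Real.mul_self_sqrt hκpos.le
  -- the state is normalized
  have hexp : Complex.exp (Complex.I * (φ : ℂ)) =
      (Real.cos φ : ℂ) + (Real.sin φ : ℂ) * Complex.I := by
    rw [mul_comm, Complex.exp_mul_I]
    simp [Complex.ofReal_cos, Complex.ofReal_sin]
  have hs2 : Real.sqrt κ ^ 2 = κ := Real.sq_sqrt hκpos.le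
  have hnorm : (∑ p, Complex.normSq (ψ p)) = 1 := by
    subst hψ hψA hψB hψC
    simp only [hexp, ket0, Fintype.sum_prod_type, Fin.sum_univ_two, Complex.normSq_apply,
      Matrix.cons_val_zero, Matrix.cons_val_one, Matrix.head_cons,
      Complex.add_re, Complex.add_im, Complex.mul_re, Complex.mul_im,
      Complex.I_re, Complex.I_im, Complex.ofReal_re, Complex.ofReal_im,
      Complex.one_re, Complex.one_im, Complex.zero_re, Complex.zero_im,
      mul_zero, zero_mul, mul_one, one_mul, add_zero, zero_add, sub_zero, zero_sub,
      neg_zero, neg_neg]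
    linear_combination
      (Real.cos δ^2 + Real.sin δ^2 * ((Real.sin α^2+Real.cos α^2) *
        (Real.sin β^2+Real.cos β^2) * (Real.sin γ^2+Real.cos γ^2) *
        (Real.sin φ^2+Real.cos φ^2)) + 2*Real.cos δ*Real.sin δ*Real.cos α*Real.cos β*
        Real.cos γ*Real.cos φ) * hs2
      + (κ * Real.sin δ^2 * ((Real.sin β^2+Real.cos β^2) * (Real.sin γ^2+Real.cos γ^2) *
        (Real.sin φ^2+Real.cos φ^2))) * pythα
      + (κ * Real.sin δ^2 * ((Real.sin γ^2+Real.cos γ^2) * (Real.sin φ^2+Real.cos φ^2))) * pythβ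
      + (κ * Real.sin δ^2 * (Real.sin φ^2+Real.cos φ^2)) * pythγ
      + (κ * Real.sin δ^2) * pythφ
      + κ * pythδ
      + hκD
  -- the key trace identity
  have hkey := aux_key ψ
  rw [hnorm] at hkey
  norm_num at hkey
  -- eigenvalue bounds for the three reduced states
  obtain ⟨hC0, hC3⟩ := aux_lam_bounds (ptrC (pureState3 ψ))
  obtain ⟨hA0, hA3⟩ := aux_lam_bounds (ptrA (pureState3 ψ))
  obtain ⟨hB0, hB3⟩ := aux_lam_bounds (ptrB (pureState3 ψ))
  subst hρ
  simp only [CHSHsq]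
  constructor <;> linarith
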